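/- Let n ≥ 1, let B be an n×n real matrix, and let ν ∈ ℝⁿ be a unit vector (with respect to the Euclidean norm). The function ω(t) = det(I + tB) · ‖(I + tB)⁻ᵀ ν‖, defined for t in a neighbourhood of 0 (where I + tB is invertible), is differentiable at t = 0 with derivative ω'(0) = trace B − ⟨Bν, ν⟩. -/

import Mathlib

open Matrix Polynomial

attribute [local instance] Matrix.linftyOpNormedRing Matrix.linftyOpNormedAlgebra

/-- Derivative of the surface Jacobian `ω(t) = det(I + tB) ‖(I + tB)⁻ᵀ ν‖` at `t = 0`:
`ω'(0) = trace B − ⟨Bν, ν⟩` (Lemma 4.1 of the paper). -/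
theorem surface_jacobian_hasDerivAt (n : ℕ) (hn : 1 ≤ n)
    (B : Matrix (Fin n) (Fin n) ℝ) (ν : EuclideanSpace ℝ (Fin n)) (hν : ‖ν‖ = 1) :
    HasDerivAt
      (fun t : ℝ =>
        ((1 : Matrix (Fin n) (Fin n) ℝ) + t • B).det *
          ‖Matrix.toEuclideanLin ((((1 : Matrix (Fin n) (Fin n) ℝ) + t • B)⁻¹)ᵀ) ν‖)
      (B.trace - (inner ℝ (Matrix.toEuclideanLin B ν) ν : ℝ)) 0 := by
  -- determinant part
  have hdet : HasDerivAt (fun t : ℝ => ((1 : Matrix (Fin n) (Fin n) ℝ) + t • B).det)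
      B.trace 0 := by
    have h2 : HasDerivAt (fun t : ℝ =>
        (Matrix.det (1 + (X : ℝ[X]) • B.map C)).divX.divX.eval t * t ^ 2) 0 0 := by
      simpa using (Polynomial.hasDerivAt ((Matrix.det (1 + (X : ℝ[X]) • B.map C)).divX.divX)
        (0:ℝ)).fun_mul (hasDerivAt_pow 2 (0:ℝ))
    have h1 : HasDerivAt (fun t : ℝ => 1 + B.trace * t) B.trace 0 := by
      simpa using ((hasDerivAt_id (0:ℝ)).const_mul B.trace).const_add 1
    exact HasDerivAt.congr_of_eventuallyEq (by simpa using h1.fun_add h2)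
      (Filter.Eventually.of_forall fun t => Matrix.det_one_add_smul t B)
  -- inverse part
  have hinv : HasDerivAt (fun t : ℝ => Ring.inverse ((1 : Matrix (Fin n) (Fin n) ℝ) + t • B))
      (-B) 0 := by
    have h : HasDerivAt (fun t : ℝ => (1 : Matrix (Fin n) (Fin n) ℝ) + t • B) B 0 := by
      exact (((hasDerivAt_id (0:ℝ)).smul_const B).const_add (1 : Matrix (Fin n) (Fin n) ℝ)).congr_deriv (by simp)
    have h1 : HasFDerivAt (Ring.inverse)
        (-(ContinuousLinearMap.mulLeftRight ℝ _ ↑(1 : (Matrix (Fin n) (Fin n) ℝ)ˣ)⁻¹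
            ↑(1 : (Matrix (Fin n) (Fin n) ℝ)ˣ)⁻¹))
        ((1 : Matrix (Fin n) (Fin n) ℝ) + (0:ℝ) • B) := by
      simpa using hasFDerivAt_ringInverse (1 : (Matrix (Fin n) (Fin n) ℝ)ˣ)
    have h2 := h1.comp_hasDerivAt 0 h; simp at h2; exact h2
  -- the vector-valued map
  set L : Matrix (Fin n) (Fin n) ℝ →ₗ[ℝ] EuclideanSpace ℝ (Fin n) :=
    { toFun := fun M => Matrix.toEuclideanLin Mᵀ ν
      map_add' := by intro M N; simp [Matrix.transpose_add]
      map_smul' := by intro c M; simp [Matrix.transpose_smul] } with hL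
  have hv : HasDerivAt
      (fun t : ℝ => Matrix.toEuclideanLin
        ((Ring.inverse ((1 : Matrix (Fin n) (Fin n) ℝ) + t • B))ᵀ) ν)
      (-(Matrix.toEuclideanLin Bᵀ ν)) 0 := by
    have := (L.toContinuousLinearMap.hasFDerivAt
      (x := Ring.inverse ((1 : Matrix (Fin n) (Fin n) ℝ) + (0:ℝ) • B))).comp_hasDerivAt 0 hinv
    simp [hL, Function.comp_def] at this
    exact this.congr_deriv (by show Matrix.toEuclideanLin (-B)ᵀ ν = _; simp)
  have hv0 : (Matrix.toEuclideanLin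
      ((Ring.inverse ((1 : Matrix (Fin n) (Fin n) ℝ) + (0:ℝ) • B))ᵀ) ν) = ν := by
    simp [Matrix.toEuclideanLin_apply]
  have hiν : (inner ℝ ν ν : ℝ) = 1 := by
    rw [real_inner_self_eq_norm_sq, hν]; norm_num
  -- inner product and sqrt
  have hinner := hv.inner ℝ hv
  rw [hv0] at hinner
  have hne : (inner ℝ (Matrix.toEuclideanLin
      ((Ring.inverse ((1 : Matrix (Fin n) (Fin n) ℝ) + (0:ℝ) • B))ᵀ) ν)
      (Matrix.toEuclideanLin
      ((Ring.inverse ((1 : Matrix (Fin n) (Fin n) ℝ) + (0:ℝ) • B))ᵀ) ν) : ℝ) ≠ 0 := by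
    rw [hv0, hiν]; norm_num
  have hsq0 := hinner.sqrt hne
  have hderiv_eq : ((inner ℝ ν (-(Matrix.toEuclideanLin Bᵀ ν)) : ℝ)
        + (inner ℝ (-(Matrix.toEuclideanLin Bᵀ ν)) ν : ℝ)) / (2 * Real.sqrt (inner ℝ ν ν : ℝ))
      = -(inner ℝ (Matrix.toEuclideanLin Bᵀ ν) ν : ℝ) := by
    rw [hiν, inner_neg_left, inner_neg_right, real_inner_comm ν, Real.sqrt_one]
    ring
  rw [hv0] at hsq0
  rw [hderiv_eq] at hsq0
  -- transpose inner identity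
  have htr : (inner ℝ (Matrix.toEuclideanLin Bᵀ ν) ν : ℝ)
      = (inner ℝ ((Matrix.toEuclideanLin B) ν) ν : ℝ) := by
    simp only [Matrix.toEuclideanLin_apply, PiLp.inner_apply, RCLike.inner_apply, conj_trivial,
      Finset.mul_sum, Matrix.mulVec, dotProduct,
      Finset.sum_mul, Matrix.transpose_apply]
    rw [Finset.sum_comm]
    refine Finset.sum_congr rfl fun i _ => Finset.sum_congr rfl fun j _ => by ring
  rw [htr] at hsq0
  -- assemble
  have hprod := hdet.fun_mul hsq0
  have harith : B.trace * Real.sqrt (inner ℝ (Matrix.toEuclideanLin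
        ((Ring.inverse ((1 : Matrix (Fin n) (Fin n) ℝ) + (0:ℝ) • B))ᵀ) ν)
        (Matrix.toEuclideanLin
        ((Ring.inverse ((1 : Matrix (Fin n) (Fin n) ℝ) + (0:ℝ) • B))ᵀ) ν) : ℝ)
      + ((1 : Matrix (Fin n) (Fin n) ℝ) + (0:ℝ) • B).det
        * -(inner ℝ ((Matrix.toEuclideanLin B) ν) ν : ℝ)
      = B.trace - (inner ℝ (Matrix.toEuclideanLin B ν) ν : ℝ) := by
    rw [hv0, hiν, Real.sqrt_one]
    simp
    ring
  rw [harith] at hprod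
  refine hprod.congr_of_eventuallyEq (Filter.Eventually.of_forall fun t => ?_)
  simp only [Matrix.nonsing_inv_eq_ringInverse, norm_eq_sqrt_real_inner]
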